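/- Let H be a Hilbert space with an orthogonal decomposition H = ⊕_{n≥0} Wₙ into closed subspaces, let Pₙ be the orthogonal projection onto Wₙ, and let x be a bounded operator on H such that Pₘ x Pₙ = 0 whenever |m − n| > k (for some fixed k). Let N = ∑ n Pₙ be the (unbounded) number operator. Then the commutator [N, x] is densely defined and extends to a bounded operator with ‖[N,x]‖ ≤ k ‖x‖ · (2k+1) (in fact a bound C(k)·‖x‖ for some constant depending only on k suffices). -/

import Mathlib

open scoped InnerProductSpace
set_option linter.unusedSectionVars false
set_option maxHeartbeats 1000000
namespace OzawaRieffelAux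

variable {H : Type*} [NormedAddCommGroup H] [InnerProductSpace ℂ H] [CompleteSpace H]
variable {W : ℕ → Submodule ℂ H} [∀ n, CompleteSpace (W n)]
variable {Q : ℕ → H →L[ℂ] H}
variable (hQ : ∀ n, Q n = (W n).subtypeL.comp ((W n).orthogonalProjection))
include hQ
variable (horth : ∀ m n, m ≠ n → ∀ u ∈ W m, ∀ v ∈ W n, inner (𝕜 := ℂ) u v = 0)

theorem Q_apply (n : ℕ) (u : H) : Q n u = ((W n).orthogonalProjection u : H) := by
  rw [hQ]; rfl

theorem Q_mem (n : ℕ) (u : H) : Q n u ∈ W n := by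
  rw [Q_apply hQ]; exact ((W n).orthogonalProjection u).2

theorem Q_eq_self {n : ℕ} {u : H} (hu : u ∈ W n) : Q n u = u := by
  rw [Q_apply hQ]; exact Submodule.starProjection_eq_self_iff.mpr hu

theorem Q_norm_le (n : ℕ) (u : H) : ‖Q n u‖ ≤ ‖u‖ := by
  rw [Q_apply hQ]
  calc ‖((W n).orthogonalProjection u : H)‖ = ‖(W n).orthogonalProjection u‖ := rfl
    _ ≤ ‖(W n).orthogonalProjection‖ * ‖u‖ := ((W n).orthogonalProjection).le_opNorm u
    _ ≤ 1 * ‖u‖ :=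
        mul_le_mul_of_nonneg_right (Submodule.orthogonalProjection_norm_le _) (norm_nonneg u)
    _ = ‖u‖ := one_mul _

theorem sub_Q_mem_orthogonal (n : ℕ) (u : H) : u - Q n u ∈ (W n)ᗮ := by
  rw [Q_apply hQ]; exact Submodule.sub_starProjection_mem_orthogonal u

theorem Q_zero (horth : ∀ m n, m ≠ n → ∀ u ∈ W m, ∀ v ∈ W n, inner (𝕜 := ℂ) u v = 0) {m n : ℕ} (hmn : m ≠ n) {u : H} (hu : u ∈ W n) : Q m u = 0 := by
  rw [Q_apply hQ]
  have : u ∈ (W m)ᗮ := by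
    rw [Submodule.mem_orthogonal]
    intro w hw
    exact horth m n hmn w hw u hu
  rw [Submodule.orthogonalProjectionOnto_apply_of_mem_orthogonal this,
    Submodule.coe_zero]

theorem orthFam (horth : ∀ m n, m ≠ n → ∀ u ∈ W m, ∀ v ∈ W n, inner (𝕜 := ℂ) u v = 0) : OrthogonalFamily ℂ (fun n => W n) (fun n => (W n).subtypeₗᵢ) :=
  fun i j hij v w => horth i j hij v v.2 w w.2

/-- Bessel-type inequality for the projections. -/
theorem bessel (horth : ∀ m n, m ≠ n → ∀ u ∈ W m, ∀ v ∈ W n, inner (𝕜 := ℂ) u v = 0) (v : H) (s : Finset ℕ) : ∑ n ∈ s, ‖Q n v‖ ^ 2 ≤ ‖v‖ ^ 2 := by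
  set w : H := ∑ n ∈ s, Q n v with hw
  have hwsq : ‖w‖ ^ 2 = ∑ n ∈ s, ‖Q n v‖ ^ 2 := by
    have := (orthFam hQ horth (W := W)).norm_sum
      (fun n => (W n).orthogonalProjection v) s
    simpa [← Q_apply hQ] using this
  have hinner : inner (𝕜 := ℂ) w (v - w) = 0 := by
    rw [hw, sum_inner]
    refine Finset.sum_eq_zero fun m hm => ?_
    have h1 : inner (𝕜 := ℂ) (Q m v) (v - Q m v) = 0 :=
      Submodule.inner_right_of_mem_orthogonal (Q_mem hQ m v) (sub_Q_mem_orthogonal hQ m v)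
    have h2 : inner (𝕜 := ℂ) (Q m v) (Q m v - w) = 0 := by
      rw [hw, inner_sub_right, inner_sum]
      have : ∑ n ∈ s, inner (𝕜 := ℂ) (Q m v) (Q n v)
          = inner (𝕜 := ℂ) (Q m v) (Q m v) := by
        refine Finset.sum_eq_single_of_mem m hm fun n hn hnm => ?_
        exact horth m n (fun h => hnm h.symm) _ (Q_mem hQ m v) _ (Q_mem hQ n v)
      rw [this, sub_self]
    have : inner (𝕜 := ℂ) (Q m v) (v - w) =
        inner (𝕜 := ℂ) (Q m v) (v - Q m v) + inner (𝕜 := ℂ) (Q m v) (Q m v - w) := by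
      rw [← inner_add_right]
      congr 1
      abel
    rw [this, h1, h2, add_zero]
  have hv : v = w + (v - w) := by abel
  have : ‖v‖ ^ 2 = ‖w‖ ^ 2 + ‖v - w‖ ^ 2 := by
    conv_lhs => rw [hv]
    rw [norm_add_sq (𝕜 := ℂ)]
    simp [hinner]
  rw [← hwsq]; rw [this]; nlinarith [sq_nonneg ‖v - w‖]

theorem summable_bessel (horth : ∀ m n, m ≠ n → ∀ u ∈ W m, ∀ v ∈ W n, inner (𝕜 := ℂ) u v = 0) (v : H) : Summable (fun n => ‖Q n v‖ ^ 2) :=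
  summable_of_sum_le (fun n => sq_nonneg _) (bessel hQ horth v)

/-- Completeness: a vector killed by every projection is zero. -/
theorem eq_zero_of_forall_Q_eq_zero
    (hdense : (⨆ n, W n).topologicalClosure = ⊤)
    (u : H) (h : ∀ p, Q p u = 0) : u = 0 := by
  have key : ∀ p, ∀ w ∈ W p, inner (𝕜 := ℂ) w u = 0 := by
    intro p w hw
    have h1 : inner (𝕜 := ℂ) w (u - Q p u) = 0 :=
      Submodule.inner_right_of_mem_orthogonal hw (sub_Q_mem_orthogonal hQ p u)
    simpa [h p] using h1
  have hle : (⨆ n, W n) ≤ (ℂ ∙ u)ᗮ := by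
    refine iSup_le fun n w hw => ?_
    rw [Submodule.mem_orthogonal_singleton_iff_inner_right, inner_eq_zero_symm]
    exact key n w hw
  have h2 : (⊤ : Submodule ℂ H) ≤ (ℂ ∙ u)ᗮ := by
    rw [← hdense]
    exact Submodule.topologicalClosure_minimal _ hle (Submodule.isClosed_orthogonal _)
  have := h2 (Submodule.mem_top (x := u))
  rw [Submodule.mem_orthogonal_singleton_iff_inner_right] at this
  exact inner_self_eq_zero.mp this

omit hQ in
theorem double_count (k : ℕ) (a : ℕ → ℝ) (ha : ∀ n, 0 ≤ a n) (B : ℝ)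
    (hbd : ∀ t : Finset ℕ, ∑ n ∈ t, a n ≤ B) (s : Finset ℕ) :
    ∑ m ∈ s, ∑ n ∈ Finset.Icc (m - k) (m + k), a n ≤ (2 * (k : ℝ) + 1) * B := by
  classical
  set T := s.biUnion (fun m => Finset.Icc (m - k) (m + k)) with hT
  have hsub : ∀ m ∈ s, Finset.Icc (m - k) (m + k) ⊆ T := by
    intro m hm
    rw [hT]
    exact Finset.subset_biUnion_of_mem (fun m => Finset.Icc (m - k) (m + k)) hm
  have hB : 0 ≤ B := le_trans (by simp) (hbd ∅)
  calc ∑ m ∈ s, ∑ n ∈ Finset.Icc (m - k) (m + k), a n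
      = ∑ m ∈ s, ∑ n ∈ T, if n ∈ Finset.Icc (m - k) (m + k) then a n else 0 := by
        refine Finset.sum_congr rfl fun m hm => ?_
        rw [Finset.sum_ite_mem, Finset.inter_eq_right.mpr (hsub m hm)]
    _ = ∑ n ∈ T, ∑ m ∈ s, if n ∈ Finset.Icc (m - k) (m + k) then a n else 0 :=
        Finset.sum_comm
    _ ≤ ∑ n ∈ T, (2 * (k : ℝ) + 1) * a n := by
        refine Finset.sum_le_sum fun n _ => ?_
        rw [← Finset.sum_filter, Finset.sum_const, nsmul_eq_mul]
        refine mul_le_mul_of_nonneg_right ?_ (ha n)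
        have hsubset : s.filter (fun m => n ∈ Finset.Icc (m - k) (m + k)) ⊆
            Finset.Icc (n - k) (n + k) := by
          intro m hm
          simp only [Finset.mem_filter, Finset.mem_Icc] at hm ⊢
          omega
        have hcard : (s.filter (fun m => n ∈ Finset.Icc (m - k) (m + k))).card ≤ 2 * k + 1 := by
          calc _ ≤ (Finset.Icc (n - k) (n + k)).card := Finset.card_le_card hsubset
            _ = n + k + 1 - (n - k) := Nat.card_Icc _ _
            _ ≤ 2 * k + 1 := by omega
        calc ((s.filter (fun m => n ∈ Finset.Icc (m - k) (m + k))).card : ℝ)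
            ≤ ((2 * k + 1 : ℕ) : ℝ) := by exact_mod_cast hcard
          _ = 2 * (k : ℝ) + 1 := by push_cast; ring
    _ = (2 * (k : ℝ) + 1) * ∑ n ∈ T, a n := (Finset.mul_sum _ _ _).symm
    _ ≤ (2 * (k : ℝ) + 1) * B := by
        refine mul_le_mul_of_nonneg_left (hbd T) (by positivity)

end OzawaRieffelAux

open OzawaRieffelAux in
/-- Ozawa–Rieffel boundedness of the commutator with the number operator.  Let
`H = ⊕ₙ Wₙ` be an orthogonal decomposition of a Hilbert space with orthogonal projections
`Q n` onto `Wₙ`, and let `x` be a bounded operator of band width `k`, i.e. `Qₘ x Qₙ = 0`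
whenever `|m - n| > k`.  Then the commutator `[N, x]` with the number operator `N = ∑ n Qₙ`
is densely defined (on `⋃ₙ (W₀ ⊕ ⋯ ⊕ Wₙ)`) and extends to a bounded operator `y` of norm at
most `k(2k+1)‖x‖`; on a vector `v ∈ Wₙ` it acts by `y v = N(x v) - n • (x v)`, where
`N(x v) = ∑ₘ m • Qₘ (x v)` (a finite sum by the band condition). -/
theorem number_operator_commutator_bounded
    {H : Type*} [NormedAddCommGroup H] [InnerProductSpace ℂ H] [CompleteSpace H]
    (W : ℕ → Submodule ℂ H) [∀ n, CompleteSpace (W n)]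
    (horth : ∀ m n, m ≠ n → ∀ u ∈ W m, ∀ v ∈ W n, inner (𝕜 := ℂ) u v = 0)
    (hdense : (⨆ n, W n).topologicalClosure = ⊤)
    (Q : ℕ → H →L[ℂ] H)
    (hQ : ∀ n, Q n = (W n).subtypeL.comp ((W n).orthogonalProjection))
    (k : ℕ) (x : H →L[ℂ] H)
    (hband : ∀ m n : ℕ, (k : ℤ) < |(m : ℤ) - (n : ℤ)| → (Q m).comp (x.comp (Q n)) = 0) :
    ∃ y : H →L[ℂ] H, ‖y‖ ≤ (k : ℝ) * (2 * (k : ℝ) + 1) * ‖x‖ ∧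
      ∀ n : ℕ, ∀ v ∈ W n,
        y v = (∑' m : ℕ, (m : ℂ) • Q m (x v)) - (n : ℂ) • x v := by
  classical
  set C : ℝ := (k : ℝ) * (2 * (k : ℝ) + 1) * ‖x‖ with hC
  have hC0 : 0 ≤ C := by positivity
  -- the band application lemma
  have hbandv : ∀ m n : ℕ, (k : ℤ) < |(m : ℤ) - (n : ℤ)| → ∀ u : H, Q m (x (Q n u)) = 0 := by
    intro m n h u
    have h0 := ContinuousLinearMap.ext_iff.mp (hband m n h) u
    simpa using h0
  -- fiberwise components of the commutator
  set f : H → ∀ m : ℕ, W m := fun v m =>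
    ∑ n ∈ Finset.Icc (m - k) (m + k),
      ((m : ℂ) - (n : ℂ)) • (W m).orthogonalProjection (x (Q n v)) with hf
  have hfcoe : ∀ v m, ((f v m : H)) =
      ∑ n ∈ Finset.Icc (m - k) (m + k), ((m : ℂ) - (n : ℂ)) • Q m (x (Q n v)) := by
    intro v m
    rw [hf]
    push_cast
    refine Finset.sum_congr rfl fun n _ => ?_
    rw [Q_apply hQ m]
  -- componentwise norm bound
  have hfle : ∀ v m, ‖(f v m : H)‖ ≤
      (k : ℝ) * ‖x‖ * ∑ n ∈ Finset.Icc (m - k) (m + k), ‖Q n v‖ := by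
    intro v m
    rw [hfcoe]
    refine le_trans (norm_sum_le _ _) ?_
    rw [Finset.mul_sum]
    refine Finset.sum_le_sum fun n hn => ?_
    rw [norm_smul]
    have hn' := Finset.mem_Icc.mp hn
    have h1 : ‖((m : ℂ) - (n : ℂ))‖ ≤ (k : ℝ) := by
      have he : ((m : ℂ) - (n : ℂ)) = (((m : ℝ) - (n : ℝ) : ℝ) : ℂ) := by push_cast; ring
      rw [he, Complex.norm_real, Real.norm_eq_abs]
      have h2 : (m : ℝ) ≤ (n : ℝ) + (k : ℝ) := by exact_mod_cast (by omega : m ≤ n + k)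
      have h3 : (n : ℝ) ≤ (m : ℝ) + (k : ℝ) := by exact_mod_cast (by omega : n ≤ m + k)
      rw [abs_sub_le_iff]
      constructor <;> linarith
    have h2 : ‖Q m (x (Q n v))‖ ≤ ‖x‖ * ‖Q n v‖ :=
      le_trans (Q_norm_le hQ m _) (x.le_opNorm _)
    calc ‖((m : ℂ) - (n : ℂ))‖ * ‖Q m (x (Q n v))‖
        ≤ (k : ℝ) * (‖x‖ * ‖Q n v‖) :=
          mul_le_mul h1 h2 (norm_nonneg _) (Nat.cast_nonneg k)
      _ = (k : ℝ) * ‖x‖ * ‖Q n v‖ := (mul_assoc _ _ _).symm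
  -- partial sum bound
  have hpartial : ∀ v (s : Finset ℕ), ∑ m ∈ s, ‖(f v m : H)‖ ^ 2 ≤ C ^ 2 * ‖v‖ ^ 2 := by
    intro v s
    have step1 : ∀ m, ‖(f v m : H)‖ ^ 2 ≤ ((k : ℝ) * ‖x‖) ^ 2 * (2 * (k : ℝ) + 1) *
        ∑ n ∈ Finset.Icc (m - k) (m + k), ‖Q n v‖ ^ 2 := by
      intro m
      have h1 : ‖(f v m : H)‖ ^ 2 ≤
          ((k : ℝ) * ‖x‖ * ∑ n ∈ Finset.Icc (m - k) (m + k), ‖Q n v‖) ^ 2 :=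
        pow_le_pow_left₀ (norm_nonneg _) (hfle v m) 2
      have h2 : (∑ n ∈ Finset.Icc (m - k) (m + k), ‖Q n v‖) ^ 2 ≤
          ((Finset.Icc (m - k) (m + k)).card : ℝ) *
            ∑ n ∈ Finset.Icc (m - k) (m + k), ‖Q n v‖ ^ 2 :=
        sq_sum_le_card_mul_sum_sq
      have hcard : ((Finset.Icc (m - k) (m + k)).card : ℝ) ≤ 2 * (k : ℝ) + 1 := by
        have : (Finset.Icc (m - k) (m + k)).card ≤ 2 * k + 1 := by
          rw [Nat.card_Icc]; omega
        calc ((Finset.Icc (m - k) (m + k)).card : ℝ) ≤ ((2 * k + 1 : ℕ) : ℝ) := by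
              exact_mod_cast this
          _ = 2 * (k : ℝ) + 1 := by push_cast; ring
      have hnn : 0 ≤ ∑ n ∈ Finset.Icc (m - k) (m + k), ‖Q n v‖ ^ 2 :=
        Finset.sum_nonneg fun n _ => sq_nonneg _
      calc ‖(f v m : H)‖ ^ 2
          ≤ ((k : ℝ) * ‖x‖ * ∑ n ∈ Finset.Icc (m - k) (m + k), ‖Q n v‖) ^ 2 := h1
        _ = ((k : ℝ) * ‖x‖) ^ 2 * (∑ n ∈ Finset.Icc (m - k) (m + k), ‖Q n v‖) ^ 2 := by ring
        _ ≤ ((k : ℝ) * ‖x‖) ^ 2 * (((Finset.Icc (m - k) (m + k)).card : ℝ) *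
              ∑ n ∈ Finset.Icc (m - k) (m + k), ‖Q n v‖ ^ 2) :=
            mul_le_mul_of_nonneg_left h2 (by positivity)
        _ ≤ ((k : ℝ) * ‖x‖) ^ 2 * ((2 * (k : ℝ) + 1) *
              ∑ n ∈ Finset.Icc (m - k) (m + k), ‖Q n v‖ ^ 2) := by
            refine mul_le_mul_of_nonneg_left ?_ (by positivity)
            exact mul_le_mul_of_nonneg_right hcard hnn
        _ = ((k : ℝ) * ‖x‖) ^ 2 * (2 * (k : ℝ) + 1) *
              ∑ n ∈ Finset.Icc (m - k) (m + k), ‖Q n v‖ ^ 2 := by ring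
    calc ∑ m ∈ s, ‖(f v m : H)‖ ^ 2
        ≤ ∑ m ∈ s, ((k : ℝ) * ‖x‖) ^ 2 * (2 * (k : ℝ) + 1) *
            ∑ n ∈ Finset.Icc (m - k) (m + k), ‖Q n v‖ ^ 2 :=
          Finset.sum_le_sum fun m _ => step1 m
      _ = ((k : ℝ) * ‖x‖) ^ 2 * (2 * (k : ℝ) + 1) *
            ∑ m ∈ s, ∑ n ∈ Finset.Icc (m - k) (m + k), ‖Q n v‖ ^ 2 := by
          rw [Finset.mul_sum]
      _ ≤ ((k : ℝ) * ‖x‖) ^ 2 * (2 * (k : ℝ) + 1) * ((2 * (k : ℝ) + 1) * ‖v‖ ^ 2) := by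
          refine mul_le_mul_of_nonneg_left ?_ (by positivity)
          exact double_count k (fun n => ‖Q n v‖ ^ 2) (fun n => sq_nonneg _) (‖v‖ ^ 2)
            (bessel hQ horth v) s
      _ = C ^ 2 * ‖v‖ ^ 2 := by rw [hC]; ring
  -- summability of the components
  have hsummable : ∀ v : H, Summable (fun m => ((f v m : H))) := by
    intro v
    have h1 : Summable (fun m => ‖f v m‖ ^ 2) :=
      summable_of_sum_le (fun m => sq_nonneg _) (fun s => by
        have := hpartial v s
        simpa using this)
    exact ((orthFam hQ horth).summable_iff_norm_sq_summable (f v)).mpr h1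
  -- the linear map
  have hfadd : ∀ u v m, f (u + v) m = f u m + f v m := by
    intro u v m
    rw [hf]
    simp only [map_add, smul_add]
    rw [Finset.sum_add_distrib]
  have hfsmul : ∀ (c : ℂ) v m, f (c • v) m = c • f v m := by
    intro c v m
    rw [hf]
    simp only [map_smul, Finset.smul_sum, smul_comm c]
  set L : H →ₗ[ℂ] H :=
    { toFun := fun v => ∑' m, ((f v m : H))
      map_add' := by
        intro u v
        have h1 : ∀ m : ℕ, ((f (u + v) m : H)) = ((f u m : H)) + ((f v m : H)) := by
          intro m; simp [hfadd]
        calc ∑' m, ((f (u + v) m : H)) = ∑' m, (((f u m : H)) + ((f v m : H))) := by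
              exact tsum_congr h1
          _ = (∑' m, ((f u m : H))) + ∑' m, ((f v m : H)) :=
              Summable.tsum_add (hsummable u) (hsummable v)
      map_smul' := by
        intro c v
        have h1 : ∀ m : ℕ, ((f (c • v) m : H)) = c • ((f v m : H)) := by
          intro m; simp [hfsmul]
        calc ∑' m, ((f (c • v) m : H)) = ∑' m, c • ((f v m : H)) := tsum_congr h1
          _ = c • ∑' m, ((f v m : H)) := ((hsummable v).hasSum.const_smul c).tsum_eq } with hL
  have hbound : ∀ v : H, ‖L v‖ ≤ C * ‖v‖ := by
    intro v
    have hs := (hsummable v).hasSum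
    have h1 : Filter.Tendsto (fun s : Finset ℕ => ‖∑ m ∈ s, ((f v m : H))‖ ^ 2)
        Filter.atTop (nhds (‖L v‖ ^ 2)) := (hs.norm.pow 2)
    have h2 : ∀ s : Finset ℕ, ‖∑ m ∈ s, ((f v m : H))‖ ^ 2 = ∑ m ∈ s, ‖f v m‖ ^ 2 :=
      fun s => (orthFam hQ horth).norm_sum (f v) s
    have h3 : ‖L v‖ ^ 2 ≤ C ^ 2 * ‖v‖ ^ 2 := by
      refine le_of_tendsto h1 (Filter.Eventually.of_forall fun s => ?_)
      rw [h2 s]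
      have := hpartial v s
      simpa using this
    have h4 : ‖L v‖ ^ 2 ≤ (C * ‖v‖) ^ 2 := by rw [mul_pow]; exact h3
    exact le_of_pow_le_pow_left₀ two_ne_zero (by positivity) h4
  refine ⟨L.mkContinuous C hbound, L.mkContinuous_norm_le hC0 hbound, ?_⟩
  intro n v hv
  have hQvn : Q n v = v := Q_eq_self hQ hv
  have hQv : ∀ p, p ≠ n → Q p v = 0 := fun p hp => Q_zero hQ horth hp hv
  -- band vanishing for x v
  have hxvband : ∀ m, m ∉ Finset.Icc (n - k) (n + k) → Q m (x v) = 0 := by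
    intro m hm
    have h0 : (k : ℤ) < |(m : ℤ) - (n : ℤ)| := by
      simp only [Finset.mem_Icc, not_and_or, not_le] at hm
      rw [lt_abs]
      omega
    calc Q m (x v) = Q m (x (Q n v)) := by rw [hQvn]
      _ = 0 := hbandv m n h0 v
  -- the components on v
  have hfv : ∀ m, ((f v m : H)) = ((m : ℂ) - (n : ℂ)) • Q m (x v) := by
    intro m
    rw [hfcoe]
    rw [Finset.sum_eq_single n]
    · rw [hQvn]
    · intro b _ hbn
      rw [hQv b hbn, map_zero, map_zero, smul_zero]
    · intro hn
      have h0 : (k : ℤ) < |(m : ℤ) - (n : ℤ)| := by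
        simp only [Finset.mem_Icc, not_and_or, not_le] at hn
        rw [lt_abs]
        omega
      rw [hbandv m n h0 v, smul_zero]
  have hfv0 : ∀ m, m ∉ Finset.Icc (n - k) (n + k) → ((f v m : H)) = 0 := by
    intro m hm
    rw [hfv m, hxvband m hm, smul_zero]
  -- reconstruction of x v
  have hxv : x v = ∑ m ∈ Finset.Icc (n - k) (n + k), Q m (x v) := by
    have h0 : ∀ p, Q p (x v - ∑ m ∈ Finset.Icc (n - k) (n + k), Q m (x v)) = 0 := by
      intro p
      rw [map_sub, map_sum]
      have hsum : ∑ m ∈ Finset.Icc (n - k) (n + k), Q p (Q m (x v)) =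
          if p ∈ Finset.Icc (n - k) (n + k) then Q p (x v) else 0 := by
        split_ifs with hp
        · have := Finset.sum_eq_single_of_mem p hp
            (fun b _ hbp => Q_zero hQ horth (fun h => hbp h.symm) (Q_mem hQ b (x v)))
          rw [this, Q_eq_self hQ (Q_mem hQ p (x v))]
        · refine Finset.sum_eq_zero fun b hb => ?_
          exact Q_zero hQ horth (fun h => hp (by rw [h]; exact hb)) (Q_mem hQ b (x v))
      rw [hsum]
      split_ifs with hp
      · rw [sub_self]
      · rw [hxvband p hp, sub_zero]
    have h1 := eq_zero_of_forall_Q_eq_zero hQ hdense _ h0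
    exact (sub_eq_zero.mp h1)
  -- finishing
  have hy : (L.mkContinuous C hbound) v = ∑' m, ((f v m : H)) := rfl
  rw [hy, tsum_eq_sum hfv0]
  have hrhs : ∑' m : ℕ, (m : ℂ) • Q m (x v) =
      ∑ m ∈ Finset.Icc (n - k) (n + k), (m : ℂ) • Q m (x v) :=
    tsum_eq_sum fun m hm => by rw [hxvband m hm, smul_zero]
  rw [hrhs]
  have hns : (n : ℂ) • x v = ∑ m ∈ Finset.Icc (n - k) (n + k), (n : ℂ) • Q m (x v) := by
    rw [← Finset.smul_sum, ← hxv]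
  rw [hns, ← Finset.sum_sub_distrib]
  refine Finset.sum_congr rfl fun m _ => ?_
  rw [hfv m, sub_smul]
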